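/- Let r and s be positive integers and let 1 ≤ n ≤ c. With R = S·γ_{n+1}(F), the following hold: (i) R ∩ γ_{c+1}(F) = γ_{c+1}(F); (ii) [R, F, …, F] (c copies of F) = γ_{c+n+1}(F)·ρ_{c+1}(S). Consequently the Baer-invariant N_cM(G_{(r,s,n)}) = (R ∩ γ_{c+1}(F)) / [R, F, …, F] is isomorphic to γ_{c+1}(F) / (γ_{c+n+1}(F)·ρ_{c+1}(S)). -/

import Mathlib

/-- `F`, the free group on two generators. -/
local notation "F" => FreeGroup (Fin 2)

/-- The generator `x` of the free group `F`. -/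
def x : F := FreeGroup.of 0

/-- The generator `y` of the free group `F`. -/
def y : F := FreeGroup.of 1

open scoped commutatorElement

/-- Left-normed commutator `[g, l₁, l₂, …, lₖ]`. -/
def lnc (g : F) (l : List F) : F := l.foldl (fun p q => ⁅p, q⁆) g

/-- `rho H k = [H, F, …, F]` (`k` copies of `F`); so `rho H (k-1) = ρ_k(H)`. -/
def rho (H : Subgroup F) : ℕ → Subgroup F
  | 0 => H
  | k + 1 => ⁅rho H k, (⊤ : Subgroup F)⁆

instance rho_normal (H : Subgroup F) [hH : H.Normal] (k : ℕ) : (rho H k).Normal := by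
  induction k with
  | zero => exact hH
  | succ k ih => haveI := ih; exact Subgroup.commutator_normal _ _

/-- Witt's formula: the number of basic commutators of weight `m` on two letters. -/
def witt2 (m : ℕ) : ℕ :=
  ((∑ e ∈ m.divisors, ArithmeticFunction.moebius e * (2 : ℤ) ^ (m / e)) / (m : ℤ)).toNat

open scoped Pointwise in
lemma commutator_sup_top {G : Type*} [Group G] (H K : Subgroup G) [H.Normal] [K.Normal] :
    ⁅H ⊔ K, (⊤ : Subgroup G)⁆ = ⁅H, (⊤ : Subgroup G)⁆ ⊔ ⁅K, (⊤ : Subgroup G)⁆ := by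
  apply le_antisymm
  · rw [Subgroup.commutator_le]
    intro a ha g _
    have : a ∈ (H : Set G) * (K : Set G) := by rw [← Subgroup.mul_normal]; exact ha
    obtain ⟨h, hh, k, hk, rfl⟩ := this
    have h1 : ⁅h, g⁆ ∈ ⁅H, (⊤ : Subgroup G)⁆ ⊔ ⁅K, (⊤ : Subgroup G)⁆ :=
      Subgroup.mem_sup_left (Subgroup.commutator_mem_commutator hh (Subgroup.mem_top g))
    have h2 : ⁅k, g⁆ ∈ ⁅H, (⊤ : Subgroup G)⁆ ⊔ ⁅K, (⊤ : Subgroup G)⁆ :=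
      Subgroup.mem_sup_right (Subgroup.commutator_mem_commutator hk (Subgroup.mem_top g))
    have hN : (⁅H, (⊤ : Subgroup G)⁆ ⊔ ⁅K, (⊤ : Subgroup G)⁆).Normal := inferInstance
    have heq : ⁅h * k, g⁆ = h * ⁅k, g⁆ * h⁻¹ * ⁅h, g⁆ := by
      simp only [commutatorElement_def]; group
    rw [heq]
    exact mul_mem (hN.conj_mem _ h2 h) h1
  · exact sup_le (Subgroup.commutator_mono le_sup_left le_rfl)
      (Subgroup.commutator_mono le_sup_right le_rfl)

lemma rho_sup (H K : Subgroup F) [H.Normal] [K.Normal] (k : ℕ) :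
    rho (H ⊔ K) k = rho H k ⊔ rho K k := by
  induction k with
  | zero => rfl
  | succ k ih =>
    show ⁅rho (H ⊔ K) k, (⊤ : Subgroup F)⁆ = ⁅rho H k, (⊤ : Subgroup F)⁆ ⊔ ⁅rho K k, (⊤ : Subgroup F)⁆
    rw [ih, commutator_sup_top]

lemma rho_lcs (m k : ℕ) : rho ((⊤ : Subgroup F).lowerCentralSeries m) k = (⊤ : Subgroup F).lowerCentralSeries (m + k) := by
  induction k with
  | zero => rfl
  | succ k ih =>
    show ⁅rho ((⊤ : Subgroup F).lowerCentralSeries m) k, (⊤ : Subgroup F)⁆ = _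
    rw [ih]
    rfl

/-- For positive integers `r, s` and `1 ≤ n ≤ c`, with `S` the normal closure of `{xʳ, yˢ}`
in `F` and `R = S·γ_{n+1}(F)`: (i) `R ∩ γ_{c+1}(F) = γ_{c+1}(F)`;
(ii) `[R, F, …, F]` (`c` copies of `F`) `= γ_{c+n+1}(F)·ρ_{c+1}(S)`; consequently
(iii) the Baer-invariant `𝒩_c M(G_{(r,s,n)}) = (R ∩ γ_{c+1}(F)) / [R, F, …, F]` is
isomorphic to `γ_{c+1}(F) / (γ_{c+n+1}(F)·ρ_{c+1}(S))`. -/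
theorem baer_invariant_reduction (r s : ℕ) (hr : 0 < r) (hs : 0 < s)
    (n c : ℕ) (hn : 1 ≤ n) (hnc : n ≤ c) :
    (Subgroup.normalClosure {x ^ r, y ^ s} ⊔ (⊤ : Subgroup F).lowerCentralSeries n) ⊓
        (⊤ : Subgroup F).lowerCentralSeries c =
      (⊤ : Subgroup F).lowerCentralSeries c ∧
    rho (Subgroup.normalClosure {x ^ r, y ^ s} ⊔ (⊤ : Subgroup F).lowerCentralSeries n) c =
      (⊤ : Subgroup F).lowerCentralSeries (c + n) ⊔ rho (Subgroup.normalClosure {x ^ r, y ^ s}) c ∧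
    Nonempty
      ((↥((Subgroup.normalClosure {x ^ r, y ^ s} ⊔ (⊤ : Subgroup F).lowerCentralSeries n) ⊓
            (⊤ : Subgroup F).lowerCentralSeries c) ⧸
          ((rho (Subgroup.normalClosure {x ^ r, y ^ s} ⊔ (⊤ : Subgroup F).lowerCentralSeries n) c).subgroupOf
            ((Subgroup.normalClosure {x ^ r, y ^ s} ⊔ (⊤ : Subgroup F).lowerCentralSeries n) ⊓
              (⊤ : Subgroup F).lowerCentralSeries c))) ≃*
        (↥((⊤ : Subgroup F).lowerCentralSeries c) ⧸
          (((⊤ : Subgroup F).lowerCentralSeries (c + n) ⊔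
              rho (Subgroup.normalClosure {x ^ r, y ^ s}) c).subgroupOf
            ((⊤ : Subgroup F).lowerCentralSeries c)))) := by
  have h1 : (Subgroup.normalClosure {x ^ r, y ^ s} ⊔ (⊤ : Subgroup F).lowerCentralSeries n) ⊓
      (⊤ : Subgroup F).lowerCentralSeries c = (⊤ : Subgroup F).lowerCentralSeries c :=
    inf_eq_right.mpr ((Subgroup.lowerCentralSeries_antitone _ hnc).trans le_sup_right)
  have h2 : rho (Subgroup.normalClosure {x ^ r, y ^ s} ⊔ (⊤ : Subgroup F).lowerCentralSeries n) c =
      (⊤ : Subgroup F).lowerCentralSeries (c + n) ⊔ rho (Subgroup.normalClosure {x ^ r, y ^ s}) c := by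
    rw [rho_sup, rho_lcs, Nat.add_comm n c, sup_comm]
  refine ⟨h1, h2, ?_⟩
  rw [h1]
  exact ⟨QuotientGroup.quotientMulEquivOfEq (by rw [h2])⟩
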